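/- Let C be an even cycle with set of maximum-priority nodes Π(C) = {v₁, …, v_ℓ} and j = π(C)/2, and decompose C into arc-disjoint paths P₁, …, P_ℓ where P_i ends at v_i. For any chain C^k_j of subtrees of the universal tree T (ordered by embeddability), the k-th width of C equals the maximum over i ∈ [ℓ] of the k-th width of P_i: α^k(C) = max_i α^k(P_i). -/

import Mathlib

/-- Feasibility of a finite node labeling `ν` (values: leaves of an ordered tree of
height `j`, i.e. lexicographically ordered `j`-tuples) on an arc `a = (v, w)`:
if `π v` is even then `ν(v)|_{π v} ≥ ν(w)|_{π v}`, and if `π v` is odd then the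
inequality is strict (the `p`-truncation keeps the first `j - p/2` components). -/
def feasArc {V M : Type*} [LinearOrder M] (π : V → ℕ) (j : ℕ)
    (ν : V → List M) (a : V × V) : Prop :=
  if Even (π a.1) then
    List.take (j - π a.1 / 2) (ν a.2) ≤ List.take (j - π a.1 / 2) (ν a.1)
  else
    List.take (j - π a.1 / 2) (ν a.2) < List.take (j - π a.1 / 2) (ν a.1)

/-- `A` (a list of arcs) admits a finite feasible node labeling with labels in the leaf
set `S` of a tree of height `j`. -/
def FeasIn {V M : Type*} [LinearOrder M] (π : V → ℕ) (j : ℕ)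
    (S : Set (List M)) (A : List (V × V)) : Prop :=
  ∃ ν : V → List M, (∀ a ∈ A, ν a.1 ∈ S ∧ ν a.2 ∈ S) ∧ ∀ a ∈ A, feasArc π j ν a

/-- The `k`-th width of a set of arcs `A` with respect to the chain of trees with leaf
sets `S 0, S 1, …` (ordered by embeddability): the least `i` such that `A` admits a
finite feasible node labeling into `S i`, and `∞` if none exists. -/
noncomputable def width {V M : Type*} [LinearOrder M] (π : V → ℕ) (j : ℕ)
    (S : ℕ → Set (List M)) (A : List (V × V)) : ℕ∞ :=
  sInf {x : ℕ∞ | ∃ i : ℕ, x = (i : ℕ∞) ∧ FeasIn π j (S i) A}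

/-- The arcs of the cycle through the (distinct) nodes of the list `c`. -/
def cycleArcs {V : Type*} (c : List V) : List (V × V) := c.zip (c.rotate 1)

/-- The arcs of the path through the nodes of the list `p`. -/
def pathArcs {V : Type*} (p : List V) : List (V × V) := p.zip p.tail

private lemma pathArcs_src {V : Type*} : ∀ (p : List V) {x y : V}, (x, y) ∈ pathArcs p →
    (∃ w, (w, x) ∈ pathArcs p) ∨ p.head? = some x
  | [], x, y, h => by simp [pathArcs] at h
  | [u], x, y, h => by simp [pathArcs] at h
  | u :: u' :: t, x, y, h => by
      rw [show pathArcs (u :: u' :: t) = (u, u') :: pathArcs (u' :: t) from rfl,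
        List.mem_cons] at h
      rcases h with h | h
      · right
        rw [Prod.mk.injEq] at h
        simp [h.1]
      · rcases pathArcs_src (u' :: t) h with ⟨w, hw⟩ | h2
        · exact Or.inl ⟨w, List.mem_cons_of_mem _ hw⟩
        · simp only [List.head?_cons, Option.some.injEq] at h2
          subst h2
          exact Or.inl ⟨u, List.mem_cons_self⟩

private lemma pathArcs_tgt {V : Type*} : ∀ (p : List V) {w x : V}, (w, x) ∈ pathArcs p →
    (∃ z, (x, z) ∈ pathArcs p) ∨ p.getLast? = some x
  | [], w, x, h => by simp [pathArcs] at h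
  | [u], w, x, h => by simp [pathArcs] at h
  | u :: u' :: t, w, x, h => by
      rw [show pathArcs (u :: u' :: t) = (u, u') :: pathArcs (u' :: t) from rfl,
        List.mem_cons] at h
      rcases h with h | h
      · obtain ⟨h1, h2⟩ := Prod.mk.injEq .. ▸ h
        subst h2
        match t with
        | [] => right; simp
        | z :: t' => exact Or.inl ⟨z, List.mem_cons_of_mem _ List.mem_cons_self⟩
      · rcases pathArcs_tgt (u' :: t) h with ⟨z, hz⟩ | h2
        · exact Or.inl ⟨z, List.mem_cons_of_mem _ hz⟩
        · right; rw [List.getLast?_cons_cons]; exact h2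

/-- Let `C` be an even cycle with maximum priority `2j`, whose
maximum-priority nodes are `Π(C) = {v 0, …, v (ℓ-1)}`, decomposed into arc-disjoint paths
`P 0, …, P (ℓ-1)` where `P i` ends at `v i` and the arcs of the paths partition the arcs
of `C`.  For any chain `S` of subtrees of height `j` of the universal tree (so feasibility
into `S i` implies feasibility into `S i'` for `i ≤ i'`), the width of `C` equals the
maximum of the widths of the paths: `α^k(C) = max_i α^k(P i)`. -/
theorem stmt_8 {V M : Type*} [LinearOrder M]
    (π : V → ℕ) (j : ℕ) (S : ℕ → Set (List M))
    (hchain : ∀ (A : List (V × V)) (i i' : ℕ), i ≤ i' →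
      FeasIn π j (S i) A → FeasIn π j (S i') A)
    (c : List V) (hc : c ≠ []) (hnodup : c.Nodup)
    (hmax : ∀ u ∈ c, π u ≤ 2 * j)
    (ℓ : ℕ) (hℓ : 0 < ℓ) (v : Fin ℓ → V)
    (hv : ∀ i, v i ∈ c ∧ π (v i) = 2 * j)
    (hPi : ∀ u ∈ c, π u = 2 * j → ∃ i, v i = u)
    (P : Fin ℓ → List V)
    (hlen : ∀ i, 2 ≤ (P i).length)
    (hends : ∀ i, (P i).getLast? = some (v i))
    (hdecomp : (cycleArcs c).Perm (List.ofFn fun i => pathArcs (P i)).flatten) :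
    width π j S (cycleArcs c) = Finset.univ.sup fun i => width π j S (pathArcs (P i)) := by
  classical
  set F : List (V × V) := (List.ofFn fun i => pathArcs (P i)).flatten with hF
  -- basic structural facts
  have hlenrot : c.length ≤ (c.rotate 1).length := by simp
  have hcyc_fst : (cycleArcs c).map Prod.fst = c := List.map_fst_zip hlenrot
  have hcyc_snd : (cycleArcs c).map Prod.snd = c.rotate 1 :=
    List.map_snd_zip (by simp)
  have hcyc_nodup : (cycleArcs c).Nodup :=
    List.Nodup.of_map Prod.fst (hcyc_fst.symm ▸ hnodup)
  have hFnodup : F.Nodup := hdecomp.nodup hcyc_nodup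
  have hfstF : (F.map Prod.fst).Nodup := by
    have := (hdecomp.map Prod.fst).nodup
    rw [hcyc_fst] at this
    exact this hnodup
  have hsndF : (F.map Prod.snd).Nodup := by
    have := (hdecomp.map Prod.snd).nodup
    rw [hcyc_snd] at this
    exact this (List.nodup_rotate.mpr hnodup)
  have hmemF : ∀ {i : Fin ℓ} {a : V × V}, a ∈ pathArcs (P i) → a ∈ F := by
    intro i a ha
    exact List.mem_flatten.2 ⟨pathArcs (P i), List.mem_ofFn.2 ⟨i, rfl⟩, ha⟩
  have hFC : ∀ {a : V × V}, a ∈ F → a ∈ cycleArcs c := fun ha => hdecomp.mem_iff.2 ha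
  have hCF : ∀ {a : V × V}, a ∈ cycleArcs c → a ∈ F := fun ha => hdecomp.mem_iff.1 ha
  -- arc-disjointness of the paths
  have hdisj : ∀ {i i' : Fin ℓ} {a : V × V},
      a ∈ pathArcs (P i) → a ∈ pathArcs (P i') → i = i' := by
    intro i i' a hi hi'
    by_contra hne
    have hpw := (List.nodup_flatten.1 hFnodup).2
    rw [List.pairwise_ofFn] at hpw
    rcases lt_or_gt_of_ne hne with hlt | hlt
    · exact hpw hlt hi hi'
    · exact hpw hlt hi' hi
  -- uniqueness of the path containing a given node as target / source
  have hU1 : ∀ {i i' : Fin ℓ} {w w' u : V},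
      (w, u) ∈ pathArcs (P i) → (w', u) ∈ pathArcs (P i') → i = i' ∧ w = w' := by
    intro i i' w w' u hi hi'
    have heq : (w, u) = (w', u) :=
      List.inj_on_of_nodup_map hsndF (hmemF hi) (hmemF hi') rfl
    have hw : w = w' := (Prod.mk.injEq .. ▸ heq).1
    subst hw
    exact ⟨hdisj hi hi', rfl⟩
  have hU2 : ∀ {i i' : Fin ℓ} {u z z' : V},
      (u, z) ∈ pathArcs (P i) → (u, z') ∈ pathArcs (P i') → i = i' ∧ z = z' := by
    intro i i' u z z' hi hi'
    have heq : (u, z) = (u, z') :=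
      List.inj_on_of_nodup_map hfstF (hmemF hi) (hmemF hi') rfl
    have hz : z = z' := (Prod.mk.injEq .. ▸ heq).2
    subst hz
    exact ⟨hdisj hi hi', rfl⟩
  -- the two directions
  apply le_antisymm
  · -- width C ≤ max width P i
    by_cases htop : ∀ k : Fin ℓ, width π j S (pathArcs (P k)) < ⊤
    · -- choose near-optimal feasible labelings for each path
      have hsel : ∀ k : Fin ℓ, ∃ i : ℕ,
          (i : ℕ∞) ≤ width π j S (pathArcs (P k)) ∧ FeasIn π j (S i) (pathArcs (P k)) := by
        intro k
        have h1 : width π j S (pathArcs (P k)) <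
            width π j S (pathArcs (P k)) + 1 :=
          ENat.lt_add_one_iff (htop k).ne |>.2 le_rfl
        have h2 := sInf_lt_iff.1 (lt_of_le_of_lt (le_of_eq rfl) h1 :
          sInf {x : ℕ∞ | ∃ i : ℕ, x = (i : ℕ∞) ∧ FeasIn π j (S i) (pathArcs (P k))} <
            width π j S (pathArcs (P k)) + 1)
        obtain ⟨a, ⟨i, rfl, hfeas⟩, hlt⟩ := h2
        exact ⟨i, (ENat.lt_add_one_iff (htop k).ne).1 hlt, hfeas⟩
      choose f hf1 hf2 using hsel
      set m : ℕ := Finset.univ.sup f with hm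
      have hfeasm : ∀ k : Fin ℓ, FeasIn π j (S m) (pathArcs (P k)) := fun k =>
        hchain _ (f k) m (Finset.le_sup (Finset.mem_univ k)) (hf2 k)
      choose ν' hν'mem hν'feas using hfeasm
      -- glue the labelings
      let ν : V → List M := fun u =>
        if h : ∃ p : Fin ℓ × V, (p.2, u) ∈ pathArcs (P p.1) then ν' h.choose.1 u
        else if h2 : ∃ p : Fin ℓ × V, (u, p.2) ∈ pathArcs (P p.1) then ν' h2.choose.1 u
        else []
      have hν_tgt : ∀ {i : Fin ℓ} {w u : V}, (w, u) ∈ pathArcs (P i) → ν u = ν' i u := by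
        intro i w u hw
        have h : ∃ p : Fin ℓ × V, (p.2, u) ∈ pathArcs (P p.1) := ⟨(i, w), hw⟩
        have hch := h.choose_spec
        have : h.choose.1 = i := (hU1 hch hw).1
        simp only [ν, dif_pos h, this]
      have hν_src : ∀ {i : Fin ℓ} {u z : V}, (u, z) ∈ pathArcs (P i) →
          (¬ ∃ p : Fin ℓ × V, (p.2, u) ∈ pathArcs (P p.1)) → ν u = ν' i u := by
        intro i u z hz hno
        have h2 : ∃ p : Fin ℓ × V, (u, p.2) ∈ pathArcs (P p.1) := ⟨(i, z), hz⟩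
        have hch := h2.choose_spec
        have : h2.choose.1 = i := (hU2 hch hz).1
        simp only [ν, dif_neg hno, dif_pos h2, this]
      have hν_src' : ∀ {i : Fin ℓ} {u z : V}, (u, z) ∈ pathArcs (P i) →
          π u < 2 * j → ν u = ν' i u := by
        intro i u z hz hlt
        by_cases h : ∃ p : Fin ℓ × V, (p.2, u) ∈ pathArcs (P p.1)
        · obtain ⟨⟨i', w⟩, hw⟩ := h
          rcases pathArcs_tgt (P i') hw with ⟨z', hz'⟩ | hlast
          · have : i = i' := (hU2 hz hz').1
            subst this
            exact hν_tgt hw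
          · rw [hends i'] at hlast
            have : u = v i' := by injection hlast with h; exact h.symm
            subst this
            exact absurd (hv i').2 hlt.ne
        · exact hν_src hz h
      -- membership of glued labels
      have hνS : ∀ {i : Fin ℓ} {x y : V}, (x, y) ∈ pathArcs (P i) →
          ν x ∈ S m ∧ ν y ∈ S m := by
        intro i x y hxy
        constructor
        · by_cases h : ∃ p : Fin ℓ × V, (p.2, x) ∈ pathArcs (P p.1)
          · obtain ⟨⟨i', w⟩, hw⟩ := h
            rw [hν_tgt hw]
            exact (hν'mem i' _ hw).2
          · rw [hν_src hxy h]
            exact (hν'mem i _ hxy).1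
        · rw [hν_tgt hxy]
          exact (hν'mem i _ hxy).2
      -- glued labeling is feasible on the cycle
      have hfeasC : FeasIn π j (S m) (cycleArcs c) := by
        refine ⟨ν, ?_, ?_⟩
        · rintro ⟨x, y⟩ ha
          obtain ⟨l, hl, hal⟩ := List.mem_flatten.1 (hCF ha)
          obtain ⟨i, rfl⟩ := List.mem_ofFn.1 hl
          exact hνS hal
        · rintro ⟨x, y⟩ ha
          obtain ⟨l, hl, hal⟩ := List.mem_flatten.1 (hCF ha)
          obtain ⟨i, rfl⟩ := List.mem_ofFn.1 hl
          have hxc : x ∈ c := (List.of_mem_zip ha).1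
          rcases eq_or_lt_of_le (hmax x hxc) with heq | hlt
          · -- priority 2j : trivially feasible
            show if Even (π x) then
                List.take (j - π x / 2) (ν y) ≤ List.take (j - π x / 2) (ν x)
              else List.take (j - π x / 2) (ν y) < List.take (j - π x / 2) (ν x)
            rw [if_pos (heq ▸ even_two_mul j : Even (π x)), heq,
              Nat.mul_div_cancel_left j (by norm_num : 0 < 2), Nat.sub_self]
            simp
          · have hx : ν x = ν' i x := hν_src' hal hlt
            have hy : ν y = ν' i y := hν_tgt hal
            have := hν'feas i _ hal
            show if Even (π x) then
                List.take (j - π x / 2) (ν y) ≤ List.take (j - π x / 2) (ν x)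
              else List.take (j - π x / 2) (ν y) < List.take (j - π x / 2) (ν x)
            rw [hx, hy]
            exact this
      have h1 : width π j S (cycleArcs c) ≤ (m : ℕ∞) := sInf_le ⟨m, rfl, hfeasC⟩
      have huniv : (Finset.univ : Finset (Fin ℓ)).Nonempty := ⟨⟨0, hℓ⟩, Finset.mem_univ _⟩
      obtain ⟨k₀, -, hk₀⟩ := Finset.exists_mem_eq_sup Finset.univ huniv f
      calc width π j S (cycleArcs c) ≤ (m : ℕ∞) := h1
        _ = (f k₀ : ℕ∞) := by rw [hm, hk₀]
        _ ≤ width π j S (pathArcs (P k₀)) := hf1 k₀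
        _ ≤ Finset.univ.sup fun i => width π j S (pathArcs (P i)) :=
            Finset.le_sup (f := fun i => width π j S (pathArcs (P i))) (Finset.mem_univ k₀)
    · push_neg at htop
      obtain ⟨k, hk⟩ := htop
      have htk : width π j S (pathArcs (P k)) = ⊤ := top_le_iff.1 hk
      have hsup : (Finset.univ.sup fun i => width π j S (pathArcs (P i))) = ⊤ :=
        top_le_iff.1 (htk ▸ Finset.le_sup
          (f := fun i => width π j S (pathArcs (P i))) (Finset.mem_univ k))
      rw [hsup]
      exact le_top
  · -- max width P i ≤ width C
    refine Finset.sup_le fun k _ => sInf_le_sInf ?_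
    rintro x ⟨i, rfl, ν, hmem, hfeas⟩
    refine ⟨i, rfl, ν, ?_, ?_⟩
    · intro a ha
      exact hmem a (hFC (hmemF ha))
    · intro a ha
      exact hfeas a (hFC (hmemF ha))
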